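/- arXiv:1209.0936 — 2 statements merged into one kernel-verified Lean document; each statement's English description precedes it below -/
import Mathlib

section
/- Let n ≥ 1 and, for every prime p, let K_p be a compact open subgroup of GL_n(ℚ_p), with K_p = GL_n(ℤ_p) for all but finitely many p, so that K = ∏_p K_p is a compact open subgroup of GL_n(A_f), where A_f denotes the ring of finite adèles of ℚ. Then for every prime number l there exists an open subgroup K'_l of K_l such that the subgroup K' = K'_l × ∏_{p ≠ l} K_p of GL_n(A_f) is neat. -/
open Polynomial

namespace NeatAux

section Qside

variable (n p : ℕ) [Fact p.Prime]

local notation "Q" => ℚ_[p]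
local notation "L" => AlgebraicClosure ℚ_[p]

lemma hpQ : (p : ℚ_[p]) ≠ 0 := by
  have h : ‖(p : ℚ_[p])‖ = ((p : ℝ))⁻¹ := Padic.norm_p
  intro h0
  rw [h0, norm_zero] at h
  have : (0:ℝ) < (p:ℝ)⁻¹ := by
    have := (Fact.out : p.Prime).pos
    positivity
  rw [← h] at this
  exact lt_irrefl _ this

/-- The set `1 + p² M_n(ℤ_p)` inside `M_n(ℚ_p)`. -/
def nbhdSet : Set (Matrix (Fin n) (Fin n) Q) :=
  {A | ∃ a : Matrix (Fin n) (Fin n) ℤ_[p],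
    A = 1 + ((p : Q) ^ 2) • a.map (algebraMap ℤ_[p] Q)}

lemma mem_nbhdSet_iff (A : Matrix (Fin n) (Fin n) Q) :
    A ∈ nbhdSet n p ↔ ∀ i j, ‖A i j - (1 : Matrix (Fin n) (Fin n) Q) i j‖ ≤ ((p:ℝ)^2)⁻¹ := by
  constructor
  · rintro ⟨a, rfl⟩ i j
    have : ((1 : Matrix (Fin n) (Fin n) Q) + ((p : Q) ^ 2) • a.map (algebraMap ℤ_[p] Q)) i j
        - (1 : Matrix (Fin n) (Fin n) Q) i j
        = (p : Q) ^ 2 * (a i j : Q) := by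
      simp [Matrix.add_apply, Matrix.smul_apply, Matrix.map_apply, smul_eq_mul]
    rw [this, norm_mul, norm_pow, Padic.norm_p]
    have h1 : ‖((a i j : Q))‖ ≤ 1 := by
      rw [PadicInt.padic_norm_e_of_padicInt]; exact PadicInt.norm_le_one _
    have hp0 : (0:ℝ) < (p:ℝ) := by exact_mod_cast (Fact.out : p.Prime).pos
    calc ((p:ℝ))⁻¹ ^ 2 * ‖((a i j : Q))‖ ≤ ((p:ℝ))⁻¹ ^ 2 * 1 := by
          apply mul_le_mul_of_nonneg_left h1; positivity
      _ = ((p:ℝ)^2)⁻¹ := by rw [mul_one, inv_pow]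
  · intro h
    refine ⟨fun i j => ⟨(A i j - (1 : Matrix (Fin n) (Fin n) Q) i j) / (p : Q) ^ 2, ?_⟩, ?_⟩
    · rw [norm_div, norm_pow, Padic.norm_p]
      have hp0 : (0:ℝ) < (p:ℝ) := by exact_mod_cast (Fact.out : p.Prime).pos
      rw [div_le_one (by positivity)]
      calc ‖A i j - (1 : Matrix (Fin n) (Fin n) Q) i j‖ ≤ ((p:ℝ)^2)⁻¹ := h i j
        _ ≤ ((p:ℝ))⁻¹^2 * ((p:ℝ)^2) / ((p:ℝ)^2) := by
            rw [inv_pow]; rw [mul_div_assoc, div_self (by positivity), mul_one]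
        _ = ((p:ℝ))⁻¹^2 := by rw [mul_div_assoc, div_self (by positivity), mul_one]
    · ext i j
      have hc : ((p : Q) ^ 2) ≠ 0 := pow_ne_zero _ (hpQ p)
      simp only [Matrix.add_apply, Matrix.smul_apply, Matrix.map_apply, smul_eq_mul,
        PadicInt.algebraMap_apply]
      change A i j = (1 : Matrix (Fin n) (Fin n) Q) i j
        + (p : Q) ^ 2 * ((A i j - (1 : Matrix (Fin n) (Fin n) Q) i j) / (p : Q) ^ 2)
      rw [mul_div_cancel₀ _ hc]
      ring

lemma isOpen_nbhdSet : IsOpen (nbhdSet n p) := by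
  have hset : nbhdSet n p = ⋂ (i : Fin n), ⋂ (j : Fin n),
      (fun A : Matrix (Fin n) (Fin n) Q => A i j) ⁻¹'
        (Metric.closedBall ((1 : Matrix (Fin n) (Fin n) Q) i j) (((p:ℝ)^2)⁻¹)) := by
    ext A
    simp only [Set.mem_iInter, Set.mem_preimage, Metric.mem_closedBall, dist_eq_norm]
    exact mem_nbhdSet_iff n p A
  rw [hset]
  refine isOpen_iInter_of_finite fun i => isOpen_iInter_of_finite fun j => ?_
  have hp0 : (0:ℝ) < (p:ℝ) := by exact_mod_cast (Fact.out : p.Prime).pos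
  have hcont : Continuous (fun A : Matrix (Fin n) (Fin n) Q => A i j) :=
    continuous_id.matrix_elem i j
  exact (IsUltrametricDist.isOpen_closedBall _ (by positivity)).preimage hcont

lemma nbhd_mul {A B : Matrix (Fin n) (Fin n) Q} (hA : A ∈ nbhdSet n p) (hB : B ∈ nbhdSet n p) :
    A * B ∈ nbhdSet n p := by
  obtain ⟨a, rfl⟩ := hA
  obtain ⟨b, rfl⟩ := hB
  refine ⟨a + b + ((p : ℤ_[p]) ^ 2) • (a * b), ?_⟩
  have hmap : ((a + b + ((p : ℤ_[p]) ^ 2) • (a * b)).map (algebraMap ℤ_[p] Q))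
      = a.map (algebraMap ℤ_[p] Q) + b.map (algebraMap ℤ_[p] Q)
        + ((p : Q) ^ 2) • (a.map (algebraMap ℤ_[p] Q) * b.map (algebraMap ℤ_[p] Q)) := by
    ext i j
    simp only [Matrix.map_apply, Matrix.add_apply, Matrix.smul_apply, smul_eq_mul, map_add,
      map_mul, map_pow, map_natCast, Matrix.mul_apply, map_sum]
  rw [hmap]
  set c : Q := (p : Q) ^ 2
  set A' := a.map (algebraMap ℤ_[p] Q)
  set B' := b.map (algebraMap ℤ_[p] Q)
  have h2 : (c • A') * (c • B') = c • (c • (A' * B')) := by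
    rw [Matrix.smul_mul, Matrix.mul_smul]
  rw [mul_add, mul_one, add_mul, one_mul, h2]
  module

/-- The subgroup of `GL_n(ℚ_p)` of elements `u` with `u, u⁻¹ ∈ 1 + p² M_n(ℤ_p)`. -/
def smallSubgroup : Subgroup (Matrix (Fin n) (Fin n) Q)ˣ where
  carrier := {u | (u : Matrix (Fin n) (Fin n) Q) ∈ nbhdSet n p ∧
    ((u⁻¹ : (Matrix (Fin n) (Fin n) Q)ˣ) : Matrix (Fin n) (Fin n) Q) ∈ nbhdSet n p}
  one_mem' := by
    constructor <;>
    · refine ⟨0, ?_⟩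
      simp
      right; ext; simp
  mul_mem' := by
    rintro u v ⟨hu1, hu2⟩ ⟨hv1, hv2⟩
    constructor
    · rw [Units.val_mul]; exact nbhd_mul n p hu1 hv1
    · rw [mul_inv_rev, Units.val_mul]; exact nbhd_mul n p hv2 hu2
  inv_mem' := by
    rintro u ⟨h1, h2⟩
    exact ⟨h2, by rwa [inv_inv]⟩

lemma mem_smallSubgroup_iff (u : (Matrix (Fin n) (Fin n) Q)ˣ) :
    u ∈ smallSubgroup n p ↔ (u : Matrix (Fin n) (Fin n) Q) ∈ nbhdSet n p ∧
      ((u⁻¹ : (Matrix (Fin n) (Fin n) Q)ˣ) : Matrix (Fin n) (Fin n) Q) ∈ nbhdSet n p :=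
  Iff.rfl

lemma isOpen_smallSubgroup : IsOpen ((smallSubgroup n p : Set (Matrix (Fin n) (Fin n) Q)ˣ)) := by
  have : (smallSubgroup n p : Set (Matrix (Fin n) (Fin n) Q)ˣ)
      = (Units.val) ⁻¹' (nbhdSet n p) ∩ (fun u : (Matrix (Fin n) (Fin n) Q)ˣ =>
          ((u⁻¹ : (Matrix (Fin n) (Fin n) Q)ˣ) : Matrix (Fin n) (Fin n) Q)) ⁻¹' (nbhdSet n p) :=
    Set.ext fun u => Iff.rfl
  rw [this]
  exact ((isOpen_nbhdSet n p).preimage Units.continuous_val).inter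
    ((isOpen_nbhdSet n p).preimage Units.continuous_coe_inv)

end Qside

/-- Evaluating the characteristic polynomial gives a determinant. -/
lemma charpoly_eval_eq_det {R : Type*} [CommRing R] {m : ℕ} (A : Matrix (Fin m) (Fin m) R)
    (x : R) : A.charpoly.eval x = (x • (1 : Matrix (Fin m) (Fin m) R) - A).det := by
  have : A.charpoly.eval x = (evalRingHom x) (Matrix.charmatrix A).det := rfl
  rw [this, RingHom.map_det]
  congr 1
  ext i j
  by_cases h : i = j <;>
    simp [Matrix.charmatrix_apply, h, Matrix.one_apply, Matrix.sub_apply, Matrix.smul_apply,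
      smul_eq_mul, Matrix.diagonal_apply]

section Lside

variable (n p : ℕ) [Fact p.Prime]

local notation "Q" => ℚ_[p]
local notation "L" => AlgebraicClosure ℚ_[p]

/-- `p²` viewed inside `ℚ̄_p`. -/
noncomputable def eConst : L := algebraMap Q L ((p : Q) ^ 2)

lemma eConst_ne_zero : eConst p ≠ 0 := by
  have h : ((p : Q) ^ 2) ≠ 0 := pow_ne_zero _ (hpQ p)
  have h2 : p ≠ 0 := (Fact.out : p.Prime).ne_zero
  simp [eConst, h, h2]

lemma eConst_int : IsIntegral ℤ_[p] (eConst p) := by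
  have h : eConst p = algebraMap ℤ_[p] L ((p : ℤ_[p]) ^ 2) := by
    rw [IsScalarTower.algebraMap_apply ℤ_[p] Q L]
    simp [eConst]
  rw [h]
  exact isIntegral_algebraMap

/-- The condition that `(ζ - 1)/p²` is integral over `ℤ_p`. -/
def Jv (ζ : Lˣ) : Prop := IsIntegral ℤ_[p] (((ζ : L) - 1) / eConst p)

lemma Jv_int {ζ : Lˣ} (h : Jv p ζ) : IsIntegral ℤ_[p] (ζ : L) := by
  have hrw : (ζ : L) = 1 + eConst p * (((ζ : L) - 1) / eConst p) := by
    rw [mul_div_cancel₀ _ (eConst_ne_zero p)]; ring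
  rw [hrw]
  exact isIntegral_one.add ((eConst_int p).mul h)

lemma Jv_one : Jv p (1 : Lˣ) := by
  simp only [Jv, Units.val_one, sub_self, zero_div]
  exact isIntegral_zero

lemma Jv_mul {a b : Lˣ} (ha : Jv p a) (hb : Jv p b) : Jv p (a * b) := by
  have key : (((a * b : Lˣ) : L) - 1) / eConst p
      = (a : L) * (((b : L) - 1) / eConst p) + ((a : L) - 1) / eConst p := by
    rw [Units.val_mul]
    field_simp
    ring
  unfold Jv
  rw [key]
  exact (((Jv_int p ha).mul hb).add ha)

/-- The subgroup of `ζ ∈ ℚ̄_p^×` with `(ζ-1)/p²` and `(ζ⁻¹-1)/p²` integral over `ℤ_p`. -/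
def intSubgroup : Subgroup Lˣ where
  carrier := {ζ | Jv p ζ ∧ Jv p ζ⁻¹}
  one_mem' := ⟨Jv_one p, by simpa using Jv_one p⟩
  mul_mem' := by
    rintro a b ⟨ha1, ha2⟩ ⟨hb1, hb2⟩
    refine ⟨Jv_mul p ha1 hb1, ?_⟩
    rw [mul_inv_rev]
    exact Jv_mul p hb2 ha2
  inv_mem' := by
    rintro a ⟨h1, h2⟩
    exact ⟨h2, by rwa [inv_inv]⟩

lemma mem_intSubgroup_iff (ζ : Lˣ) : ζ ∈ intSubgroup p ↔ Jv p ζ ∧ Jv p ζ⁻¹ := Iff.rfl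

lemma det_eq_zero_of_isRoot (u : (Matrix (Fin n) (Fin n) Q)ˣ) (x : Lˣ)
    (hx : (((u : Matrix (Fin n) (Fin n) Q)).charpoly.map (algebraMap Q L)).IsRoot (x : L)) :
    ((x : L) • (1 : Matrix (Fin n) (Fin n) L)
      - ((u : Matrix (Fin n) (Fin n) Q)).map (algebraMap Q L)).det = 0 := by
  rw [← Matrix.charpoly_map] at hx
  rw [← charpoly_eval_eq_det]
  exact hx

lemma isRoot_inv (u : (Matrix (Fin n) (Fin n) Q)ˣ) (x : Lˣ)
    (hx : (((u : Matrix (Fin n) (Fin n) Q)).charpoly.map (algebraMap Q L)).IsRoot (x : L)) :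
    ((((u⁻¹ : (Matrix (Fin n) (Fin n) Q)ˣ) : Matrix (Fin n) (Fin n) Q)).charpoly.map
      (algebraMap Q L)).IsRoot ((x⁻¹ : Lˣ) : L) := by
  set φ := algebraMap Q L
  set B := ((u : Matrix (Fin n) (Fin n) Q)).map φ with hBdef
  set B' := (((u⁻¹ : (Matrix (Fin n) (Fin n) Q)ˣ) : Matrix (Fin n) (Fin n) Q)).map φ with hB'def
  have hdet : ((x : L) • (1 : Matrix (Fin n) (Fin n) L) - B).det = 0 :=
    det_eq_zero_of_isRoot n p u x hx
  have hBB' : B * B' = 1 := by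
    rw [hBdef, hB'def, ← Matrix.map_mul]
    have : ((u : Matrix (Fin n) (Fin n) Q) *
        ((u⁻¹ : (Matrix (Fin n) (Fin n) Q)ˣ) : Matrix (Fin n) (Fin n) Q)) = 1 := u.mul_inv
    rw [this]
    exact Matrix.map_one φ (map_zero φ) (map_one φ)
  have hxne : (x : L) ≠ 0 := Units.ne_zero x
  have hval : ((x⁻¹ : Lˣ) : L) = ((x : L))⁻¹ := Units.val_inv_eq_inv_val x
  rw [← Matrix.charpoly_map, Polynomial.IsRoot, charpoly_eval_eq_det, hval]
  have hk : ((x : L))⁻¹ • (1 : Matrix (Fin n) (Fin n) L) - B'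
      = (-(((x : L))⁻¹)) • (((x : L) • (1 : Matrix (Fin n) (Fin n) L) - B) * B') := by
    rw [Matrix.sub_mul, Matrix.smul_mul, one_mul, hBB', smul_sub, smul_smul]
    have h1 : (-(((x : L))⁻¹)) * (x : L) = -1 := by
      field_simp
    rw [h1, neg_one_smul]
    have h2 : (-(((x : L))⁻¹)) • (1 : Matrix (Fin n) (Fin n) L)
        = -(((x : L))⁻¹ • (1 : Matrix (Fin n) (Fin n) L)) := by
      rw [neg_smul]
    rw [h2]
    abel
  rw [hk, Matrix.det_smul, Matrix.det_mul, hdet, zero_mul, mul_zero]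

lemma key_root (u : (Matrix (Fin n) (Fin n) Q)ˣ)
    (hu : (u : Matrix (Fin n) (Fin n) Q) ∈ nbhdSet n p) (x : Lˣ)
    (hx : (((u : Matrix (Fin n) (Fin n) Q)).charpoly.map (algebraMap Q L)).IsRoot (x : L)) :
    Jv p x := by
  obtain ⟨a, ha⟩ := hu
  set φ := algebraMap Q L
  set f := algebraMap ℤ_[p] Q
  set e := eConst p with hedef
  set μ := (((x : L)) - 1) / e with hμdef
  set A2 := (a.map f).map φ with hA2def
  have he0 : e ≠ 0 := eConst_ne_zero p
  have hdet : ((x : L) • (1 : Matrix (Fin n) (Fin n) L)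
      - ((u : Matrix (Fin n) (Fin n) Q)).map φ).det = 0 := det_eq_zero_of_isRoot n p u x hx
  have hB : ((u : Matrix (Fin n) (Fin n) Q)).map φ
      = 1 + e • A2 := by
    rw [ha]
    ext i j
    simp only [Matrix.map_apply, Matrix.add_apply, Matrix.smul_apply, smul_eq_mul, map_add,
      map_mul, map_pow, Matrix.one_apply, apply_ite φ, map_one, map_zero, hA2def, hedef, eConst]
    rfl
  have hsmul : e • (μ • (1 : Matrix (Fin n) (Fin n) L) - A2)
      = (x : L) • (1 : Matrix (Fin n) (Fin n) L)
        - ((u : Matrix (Fin n) (Fin n) Q)).map φ := by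
    rw [hB, smul_sub, smul_smul, mul_div_cancel₀ _ he0, sub_smul, one_smul]
    abel
  have hdet2 : (μ • (1 : Matrix (Fin n) (Fin n) L) - A2).det = 0 := by
    have hcongr := congrArg Matrix.det hsmul
    rw [Matrix.det_smul, hdet] at hcongr
    rcases mul_eq_zero.mp hcongr with h | h
    · exact absurd h (pow_ne_zero _ he0)
    · exact h
  refine ⟨a.charpoly, a.charpoly_monic, ?_⟩
  rw [Polynomial.eval₂_eq_eval_map, IsScalarTower.algebraMap_eq ℤ_[p] Q L,
    ← Polynomial.map_map, ← Matrix.charpoly_map, ← Matrix.charpoly_map,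
    charpoly_eval_eq_det]
  exact hdet2

lemma eig_subset (u : (Matrix (Fin n) (Fin n) Q)ˣ)
    (hu1 : (u : Matrix (Fin n) (Fin n) Q) ∈ nbhdSet n p)
    (hu2 : ((u⁻¹ : (Matrix (Fin n) (Fin n) Q)ˣ) : Matrix (Fin n) (Fin n) Q) ∈ nbhdSet n p) :
    {x : Lˣ | (((u : Matrix (Fin n) (Fin n) Q)).charpoly.map (algebraMap Q L)).IsRoot (x : L)}
      ⊆ (intSubgroup p : Set Lˣ) := by
  intro x hx
  refine ⟨key_root n p u hu1 x hx, ?_⟩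
  exact key_root n p u⁻¹ hu2 x⁻¹ (isRoot_inv n p u x hx)

lemma torsion_eq_one (ζ : Lˣ) (hζ : ζ ∈ intSubgroup p) (hfin : IsOfFinOrder ζ) : ζ = 1 := by
  by_contra hne
  set m := orderOf ζ with hm
  have hm0 : 0 < m := hfin.orderOf_pos
  have hm1 : m ≠ 1 := fun h => hne (orderOf_eq_one_iff.mp h)
  set q := m.minFac with hqdef
  have hq : q.Prime := Nat.minFac_prime hm1
  have hqdvd : q ∣ m := Nat.minFac_dvd m
  set k := m / q with hk
  have hkm : k * q = m := Nat.div_mul_cancel hqdvd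
  set η := ζ ^ k with hη
  have hηmem : η ∈ intSubgroup p := pow_mem hζ k
  have hηq : η ^ q = 1 := by
    rw [hη, ← pow_mul, hkm, pow_orderOf_eq_one]
  have hη1 : η ≠ 1 := by
    intro h
    have hdvd : m ∣ k := orderOf_dvd_of_pow_eq_one (by rw [← hη, h])
    have hklt : k < m := Nat.div_lt_self hm0 hq.one_lt
    have hk0 : 0 < k := Nat.div_pos (Nat.le_of_dvd hm0 hqdvd) hq.pos
    exact absurd (Nat.le_of_dvd hk0 hdvd) (not_le.mpr hklt)
  set z := ((η : Lˣ) : L) with hz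
  have hz1 : z ≠ 1 := fun h => hη1 (Units.ext h)
  have hzq : z ^ q = 1 := by rw [hz, ← Units.val_pow_eq_pow_val, hηq, Units.val_one]
  have hsum : ∑ i ∈ Finset.range q, z ^ i = 0 := by
    have hgs := geom_sum_mul z q
    rw [hzq, sub_self] at hgs
    rcases mul_eq_zero.mp hgs with h | h
    · exact h
    · exact absurd h (sub_ne_zero.mpr hz1)
  have he0 : eConst p ≠ 0 := eConst_ne_zero p
  set w := (z - 1) / eConst p with hw
  have hwint : IsIntegral ℤ_[p] w := (mem_intSubgroup_iff p η).mp hηmem |>.1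
  have hew : eConst p * w = z - 1 := mul_div_cancel₀ _ he0
  have hzi : ∀ i : ℕ, z ^ i = 1 + eConst p * (w * ∑ j ∈ Finset.range i, z ^ j) := by
    intro i
    have hgs := geom_sum_mul z i
    have : z ^ i - 1 = eConst p * (w * ∑ j ∈ Finset.range i, z ^ j) := by
      rw [← hgs, ← hew]; ring
    linear_combination this
  set T := ∑ i ∈ Finset.range q, ∑ j ∈ Finset.range i, z ^ j with hT
  have hsum2 : (q : L) + eConst p * (w * T) = 0 := by
    have : ∑ i ∈ Finset.range q, z ^ i
        = ∑ i ∈ Finset.range q, (1 + eConst p * (w * ∑ j ∈ Finset.range i, z ^ j)) :=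
      Finset.sum_congr rfl fun i _ => hzi i
    rw [this, Finset.sum_add_distrib, Finset.sum_const, Finset.card_range] at hsum
    rw [← hsum]
    simp only [nsmul_eq_mul, mul_one, hT]
    congr 1
    rw [← Finset.mul_sum]
    congr 1
    rw [← Finset.mul_sum]
  set W := -(w * T) with hW
  have hO : IsIntegral ℤ_[p] W := by
    have hzint : IsIntegral ℤ_[p] z := Jv_int p hwint
    have hTint : IsIntegral ℤ_[p] T := by
      apply IsIntegral.sum
      intro i _
      apply IsIntegral.sum
      intro j _
      exact hzint.pow j
    exact (hwint.mul hTint).neg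
  have hqL : (q : L) = eConst p * W := by
    rw [hW]
    linear_combination hsum2
  set c0 : Q := (q : Q) / ((p : Q) ^ 2) with hc0
  have hmapc0 : algebraMap Q L c0 = W := by
    rw [hc0, map_div₀, map_natCast, map_pow]
    rw [eq_comm, eq_div_iff (by simpa [eConst] using he0 : (algebraMap Q L ((p:Q)) ^ 2) ≠ 0)]
    have : algebraMap Q L ((p : Q)) ^ 2 = eConst p := by rw [eConst, map_pow]
    rw [this, mul_comm, ← hqL]
  have hc0int : IsIntegral ℤ_[p] c0 := by
    exact IsIntegral.tower_bot (algebraMap Q L).injective (by rw [hmapc0]; exact hO)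
  obtain ⟨d, hd⟩ := IsIntegrallyClosed.isIntegral_iff.mp hc0int
  have hdn : ‖(d : Q)‖ ≤ 1 := by
    rw [PadicInt.padic_norm_e_of_padicInt]
    exact PadicInt.norm_le_one d
  have hp1 : (1 : ℝ) < (p : ℝ) := by exact_mod_cast (Fact.out : p.Prime).one_lt
  have hp0 : (0 : ℝ) < (p : ℝ) := lt_trans one_pos hp1
  have hqnorm : (p : ℝ)⁻¹ ≤ ‖(q : Q)‖ := by
    by_cases hqp : q = p
    · rw [hqp]
      rw [Padic.norm_p]
    · have hndvd : ¬ ((p : ℤ) ∣ (q : ℤ)) := by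
        intro hdvd
        have : p ∣ q := Int.ofNat_dvd.mp hdvd
        exact hqp ((Nat.prime_dvd_prime_iff_eq (Fact.out : p.Prime) hq).mp this).symm
      have h1 : ‖((q : ℤ) : Q)‖ = 1 := by
        refine le_antisymm (Padic.norm_int_le_one _) ?_
        by_contra hlt
        exact hndvd (Padic.norm_intCast_lt_one_iff.mp (lt_of_not_ge hlt))
      have : ((q : ℤ) : Q) = (q : Q) := by push_cast; ring
      rw [this] at h1
      rw [h1]
      exact inv_le_one_of_one_le₀ hp1.le
  have hc0norm : ‖c0‖ = ‖(q : Q)‖ * (p : ℝ) ^ 2 := by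
    rw [hc0, norm_div, norm_pow, Padic.norm_p, div_eq_mul_inv, inv_pow, inv_inv]
  have hfinal : (p : ℝ) ≤ ‖c0‖ := by
    rw [hc0norm]
    calc (p : ℝ) = (p : ℝ)⁻¹ * (p : ℝ) ^ 2 := by field_simp
      _ ≤ ‖(q : Q)‖ * (p : ℝ) ^ 2 := by
          apply mul_le_mul_of_nonneg_right hqnorm
          positivity
  have hle : ‖c0‖ ≤ 1 := by
    rw [← hd, PadicInt.algebraMap_apply]
    exact hdn
  linarith

end Lside

end NeatAux


instance (p : Nat.Primes) : Fact (p : ℕ).Prime := ⟨p.2⟩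

/-- The subgroup `Eig_p(g)` of `ℚ̄_p^×` generated by the eigenvalues (in a fixed
algebraic closure `ℚ̄_p` of `ℚ_p`) of a matrix `g` with coefficients in `ℚ_p`, i.e. by
the units of `ℚ̄_p` that are roots of the characteristic polynomial of `g`. -/
noncomputable def eigenvalueGroup (n : ℕ) (p : Nat.Primes)
    (g : Matrix (Fin n) (Fin n) ℚ_[(p : ℕ)]) : Subgroup (AlgebraicClosure ℚ_[(p : ℕ)])ˣ :=
  Subgroup.closure
    {x : (AlgebraicClosure ℚ_[(p : ℕ)])ˣ |
      (g.charpoly.map (algebraMap ℚ_[(p : ℕ)] (AlgebraicClosure ℚ_[(p : ℕ)]))).IsRoot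
        (x : AlgebraicClosure ℚ_[(p : ℕ)])}

/-- An element `g = (g_p)_p` of `GL_n(A_f) = ∏'_p GL_n(ℚ_p)` is *neat* (with respect to a
fixed family of embeddings `ι_p : ℚ̄ → ℚ̄_p`) if the intersection over all primes `p` of
the torsion subgroups of `ℚ̄^× ∩ Eig_p(g_p)` is trivial. -/
def IsNeatElem (n : ℕ)
    (ι : ∀ p : Nat.Primes, AlgebraicClosure ℚ →+* AlgebraicClosure ℚ_[(p : ℕ)])
    (g : ∀ p : Nat.Primes, (Matrix (Fin n) (Fin n) ℚ_[(p : ℕ)])ˣ) : Prop :=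
  ∀ x : (AlgebraicClosure ℚ)ˣ, IsOfFinOrder x →
    (∀ p : Nat.Primes,
      x ∈ (eigenvalueGroup n p ((g p : (Matrix (Fin n) (Fin n) ℚ_[(p : ℕ)])ˣ) :
        Matrix (Fin n) (Fin n) ℚ_[(p : ℕ)])).comap (Units.map (ι p).toMonoidHom)) →
    x = 1

/-- The subgroup `GL_n(ℤ_p)` of `GL_n(ℚ_p)`, i.e. the image of the map on units induced
by the inclusion `ℤ_p → ℚ_p`. -/
noncomputable def glZp (n : ℕ) (p : Nat.Primes) :
    Subgroup (Matrix (Fin n) (Fin n) ℚ_[(p : ℕ)])ˣ :=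
  (Units.map (RingHom.mapMatrix
    (algebraMap ℤ_[(p : ℕ)] ℚ_[(p : ℕ)])).toMonoidHom).range

/-- Let `n ≥ 1` and, for every prime `p`, let `K_p` be a compact open subgroup of
`GL_n(ℚ_p)`, with `K_p = GL_n(ℤ_p)` for all but finitely many `p` (so that
`K = ∏_p K_p` is a compact open subgroup of `GL_n(A_f)`). Then for every prime `l`
there exists an open subgroup `K'_l` of `K_l` such that the subgroup
`K' = K'_l × ∏_{p ≠ l} K_p` of `GL_n(A_f)` is neat, i.e. every
`g = (g_p)_p` with `g_l ∈ K'_l` and `g_p ∈ K_p` for `p ≠ l` is a neat element. -/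
theorem stmt_2 (n : ℕ) (hn : 1 ≤ n)
    (ι : ∀ p : Nat.Primes, AlgebraicClosure ℚ →+* AlgebraicClosure ℚ_[(p : ℕ)])
    (K : ∀ p : Nat.Primes, Subgroup (Matrix (Fin n) (Fin n) ℚ_[(p : ℕ)])ˣ)
    (hKcompact : ∀ p : Nat.Primes,
      IsCompact (K p : Set (Matrix (Fin n) (Fin n) ℚ_[(p : ℕ)])ˣ))
    (hKopen : ∀ p : Nat.Primes,
      IsOpen (K p : Set (Matrix (Fin n) (Fin n) ℚ_[(p : ℕ)])ˣ))
    (hKint : {p : Nat.Primes | K p ≠ glZp n p}.Finite) :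
    ∀ l : Nat.Primes, ∃ K'l : Subgroup (Matrix (Fin n) (Fin n) ℚ_[(l : ℕ)])ˣ,
      K'l ≤ K l ∧ IsOpen (K'l : Set (Matrix (Fin n) (Fin n) ℚ_[(l : ℕ)])ˣ) ∧
      ∀ g : ∀ p : Nat.Primes, (Matrix (Fin n) (Fin n) ℚ_[(p : ℕ)])ˣ,
        g l ∈ K'l → (∀ p : Nat.Primes, p ≠ l → g p ∈ K p) → IsNeatElem n ι g := by
  intro l
  classical
  refine ⟨K l ⊓ NeatAux.smallSubgroup n (l : ℕ), inf_le_left, ?_, ?_⟩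
  · rw [Subgroup.coe_inf]
    exact (hKopen l).inter (NeatAux.isOpen_smallSubgroup n (l : ℕ))
  · intro g hgl hrest
    intro x hx hmem
    have hm := hmem l
    rw [Subgroup.mem_comap] at hm
    have hsmall : g l ∈ NeatAux.smallSubgroup n (l : ℕ) := (Subgroup.mem_inf.mp hgl).2
    obtain ⟨h1, h2⟩ := (NeatAux.mem_smallSubgroup_iff n (l : ℕ) (g l)).mp hsmall
    have hsub := NeatAux.eig_subset n (l : ℕ) (g l) h1 h2
    have hle : eigenvalueGroup n l ((g l : (Matrix (Fin n) (Fin n) ℚ_[(l : ℕ)])ˣ) :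
        Matrix (Fin n) (Fin n) ℚ_[(l : ℕ)]) ≤ NeatAux.intSubgroup (l : ℕ) :=
      (Subgroup.closure_le (NeatAux.intSubgroup (l : ℕ))).mpr hsub
    have hζmem : Units.map (ι l).toMonoidHom x ∈ NeatAux.intSubgroup (l : ℕ) := hle hm
    have hfin : IsOfFinOrder (Units.map (ι l).toMonoidHom x) :=
      MonoidHom.isOfFinOrder _ hx
    have hone : Units.map (ι l).toMonoidHom x = 1 :=
      NeatAux.torsion_eq_one (l : ℕ) _ hζmem hfin
    have hval : (ι l) (x : AlgebraicClosure ℚ) = 1 := congrArg Units.val hone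
    apply Units.ext
    apply (ι l).injective
    rw [Units.val_one, map_one]
    exact hval
end

section
/- Let G be a group, K a subgroup of G, I a subgroup of K, and m an element of G. If the indices [K : I] and [K : K ∩ mKm⁻¹] are finite, then the index [I : I ∩ mIm⁻¹] is finite and satisfies [I : I ∩ mIm⁻¹] ≤ [K : K ∩ mKm⁻¹] · [K : I]. -/
/-- For a subgroup `H` of `G` and `m : G`, the conjugate subgroup `mHm⁻¹`. -/
def conjSubgroup {G : Type*} [Group G] (m : G) (H : Subgroup G) : Subgroup G :=
  H.map (MulAut.conj m).toMonoidHom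

theorem conjSubgroup_relindex {G : Type*} [Group G] (m : G) (I K : Subgroup G) :
    (conjSubgroup m I).relIndex (conjSubgroup m K) = I.relIndex K := by
  have h := Subgroup.relIndex_comap (H := conjSubgroup m I)
    ((MulAut.conj m).toMonoidHom) K
  rw [show Subgroup.comap (MulAut.conj m).toMonoidHom (conjSubgroup m I) = I from
    Subgroup.comap_map_eq_self_of_injective (MulAut.conj m).injective I] at h
  exact h.symm

theorem conjSubgroup_mono {G : Type*} [Group G] (m : G) {I K : Subgroup G} (h : I ≤ K) :
    conjSubgroup m I ≤ conjSubgroup m K :=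
  Subgroup.map_mono h

/-- Let `G` be a group, `K` a subgroup of `G`, `I` a subgroup of `K`, and `m ∈ G`.
If the indices `[K : I]` and `[K : K ∩ mKm⁻¹]` are finite, then `[I : I ∩ mIm⁻¹]` is
finite and `[I : I ∩ mIm⁻¹] ≤ [K : K ∩ mKm⁻¹] · [K : I]`. -/
theorem stmt_4 {G : Type*} [Group G] (K I : Subgroup G) (hIK : I ≤ K) (m : G)
    (hfin₁ : I.relIndex K ≠ 0)
    (hfin₂ : (K ⊓ conjSubgroup m K).relIndex K ≠ 0) :
    (I ⊓ conjSubgroup m I).relIndex I ≠ 0 ∧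
      (I ⊓ conjSubgroup m I).relIndex I ≤
        (K ⊓ conjSubgroup m K).relIndex K * I.relIndex K := by
  set fI := conjSubgroup m I
  set fK := conjSubgroup m K
  have hfIK : fI ≤ fK := conjSubgroup_mono m hIK
  have h1 : fI.relIndex fK ≠ 0 := by rw [conjSubgroup_relindex]; exact hfin₁
  have h2 : fK.relIndex K ≠ 0 := by
    rwa [inf_comm, Subgroup.inf_relIndex_right] at hfin₂
  have h3 : fI.relIndex K ≠ 0 := Subgroup.relIndex_ne_zero_trans h1 h2
  have h4 : fI.relIndex I ≠ 0 := fun h =>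
    h3 (Subgroup.relIndex_eq_zero_of_le_right hIK h)
  have heq : (I ⊓ fI).relIndex I = fI.relIndex I := by
    rw [inf_comm, Subgroup.inf_relIndex_right]
  constructor
  · rw [heq]; exact h4
  · rw [heq]
    have hchain : fI.relIndex (fK ⊓ I) * fK.relIndex I = fI.relIndex I := by
      have := Subgroup.relIndex_inf_mul_relIndex fI fK I
      rwa [inf_of_le_left hfIK] at this
    rw [← hchain, mul_comm ((K ⊓ fK).relIndex K)]
    have hb1 : fI.relIndex (fK ⊓ I) ≤ I.relIndex K := by
      rw [← conjSubgroup_relindex m I K]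
      exact Subgroup.relIndex_le_of_le_right inf_le_left h1
    have hb2 : fK.relIndex I ≤ (K ⊓ fK).relIndex K := by
      rw [inf_comm, Subgroup.inf_relIndex_right]
      exact Subgroup.relIndex_le_of_le_right hIK h2
    exact Nat.mul_le_mul hb1 hb2
end
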